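/- arXiv:2210.15817 — 2 statements merged into one kernel-verified Lean document; each statement's English description precedes it below -/
import Mathlib

section
/- Let A be a Banach algebra and X, Y ∈ A. Define S₂(t) = exp(Xt/2)·exp(Yt)·exp(Xt/2). Then exp((X+Y)t) − S₂(t) is O(t³) as t → 0: there exist C > 0 and δ > 0 such that for all |t| ≤ δ, ‖exp((X+Y)t) − S₂(t)‖ ≤ C·|t|³. -/
open NormedSpace

section
variable {𝔸 : Type*} [NormedRing 𝔸] [NormedAlgebra ℂ 𝔸] [CompleteSpace 𝔸]

lemma strang_analytic (A : 𝔸) : AnalyticAt ℂ (fun z : ℂ => exp (z • A)) 0 := by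
  have h1 : AnalyticAt ℂ (fun z : ℂ => z • A) 0 :=
    ((ContinuousLinearMap.smulRight (ContinuousLinearMap.id ℂ ℂ) A).analyticAt (0:ℂ))
  have h2 : AnalyticAt ℂ exp ((fun z : ℂ => z • A) 0) := exp_analytic _
  exact AnalyticAt.comp (f := fun z : ℂ => z • A) h2 h1

lemma strang_bigO (X Y : 𝔸) :
    (fun z : ℂ => exp (z • (X + Y)) -
        exp (z • ((2:ℂ)⁻¹ • X)) * exp (z • Y) * exp (z • ((2:ℂ)⁻¹ • X)))
      =O[nhds (0:ℂ)] fun z => ‖z‖ ^ 3 := by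
  set W : 𝔸 := (2:ℂ)⁻¹ • X with hWdef
  set Z : 𝔸 := X + Y with hZdef
  set eW : ℂ → 𝔸 := fun z => exp (z • W) with heW
  set eY : ℂ → 𝔸 := fun z => exp (z • Y) with heY
  set eZ : ℂ → 𝔸 := fun z => exp (z • Z) with heZ
  set h : ℂ → 𝔸 := fun z => eZ z - eW z * eY z * eW z with hh
  set h' : ℂ → 𝔸 := fun z =>
    Z * eZ z - (((W * eW z) * eY z + eW z * (Y * eY z)) * eW z
      + (eW z * eY z) * (W * eW z)) with hh'
  -- analyticity
  have hA : AnalyticAt ℂ h 0 :=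
    (strang_analytic Z).sub (((strang_analytic W).mul (strang_analytic Y)).mul (strang_analytic W))
  -- first derivative everywhere
  have hd : ∀ z : ℂ, HasDerivAt h (h' z) z := by
    intro z
    exact (hasDerivAt_exp_smul_const' Z z).sub
      (((hasDerivAt_exp_smul_const' W z).mul (hasDerivAt_exp_smul_const' Y z)).mul
        (hasDerivAt_exp_smul_const' W z))
  have hderiv : deriv h = h' := funext fun z => (hd z).deriv
  -- values of exp at 0
  have e0 : ∀ A : 𝔸, exp ((0:ℂ) • A) = 1 := by
    intro A; rw [zero_smul, exp_zero]
  -- h 0 = 0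
  have h0 : h 0 = 0 := by
    simp only [hh, heZ, heW, heY, e0, one_mul, mul_one, sub_self]
  -- h' 0 = 0
  have h'0 : h' 0 = 0 := by
    simp only [hh', heZ, heW, heY, e0, one_mul, mul_one, hZdef, hWdef]
    rw [sub_eq_zero]
    module
  -- second derivative at 0
  have hW0 := hasDerivAt_exp_smul_const' W (0:ℂ)
  have hY0 := hasDerivAt_exp_smul_const' Y (0:ℂ)
  have hZ0 := hasDerivAt_exp_smul_const' Z (0:ℂ)
  have h2 := (hZ0.const_mul Z).sub
      (((((hW0.const_mul W).mul hY0).add (hW0.mul (hY0.const_mul Y))).mul hW0).add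
        ((hW0.mul hY0).mul (hW0.const_mul W)))
  have h2' : HasDerivAt h' ((Z * (Z * exp ((0:ℂ) • Z))) -
      (((W * (W * exp ((0:ℂ) • W)) * exp ((0:ℂ) • Y) + W * exp ((0:ℂ) • W) * (Y * exp ((0:ℂ) • Y)))
          + (W * exp ((0:ℂ) • W) * (Y * exp ((0:ℂ) • Y)) + exp ((0:ℂ) • W) * (Y * (Y * exp ((0:ℂ) • Y))))) * exp ((0:ℂ) • W)
        + (W * exp ((0:ℂ) • W) * exp ((0:ℂ) • Y) + exp ((0:ℂ) • W) * (Y * exp ((0:ℂ) • Y))) * (W * exp ((0:ℂ) • W))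
        + ((W * exp ((0:ℂ) • W) * exp ((0:ℂ) • Y) + exp ((0:ℂ) • W) * (Y * exp ((0:ℂ) • Y))) * (W * exp ((0:ℂ) • W))
          + exp ((0:ℂ) • W) * exp ((0:ℂ) • Y) * (W * (W * exp ((0:ℂ) • W)))))) 0 := by
    exact h2
  have hd2 : deriv h' 0 = 0 := by
    rw [h2'.deriv, sub_eq_zero]
    simp only [e0, one_mul, mul_one]
    simp only [hZdef, hWdef, add_mul, mul_add, smul_mul_assoc,
      mul_smul_comm, smul_smul, mul_assoc]
    module
  -- iterated derivatives vanish up to order 2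
  have i0 : iteratedDeriv 0 h 0 = 0 := by rw [iteratedDeriv_zero]; exact h0
  have i1 : iteratedDeriv 1 h 0 = 0 := by rw [iteratedDeriv_one, hderiv]; exact h'0
  have i2 : iteratedDeriv 2 h 0 = 0 := by
    rw [iteratedDeriv_succ, iteratedDeriv_one, hderiv]; exact hd2
  have ivan : ∀ n < 3, iteratedDeriv n h 0 = 0 := by
    intro n hn
    interval_cases n
    · exact i0
    · exact i1
    · exact i2
  -- power series coefficients vanish
  obtain ⟨p, r, hball⟩ := hA
  have hps : ∀ n < 3, ∀ y : ℂ, (p n fun _ => y) = 0 := by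
    intro n hn y
    have hfs := hball.factorial_smul (y := y) n
    rw [iteratedFDeriv_apply_eq_iteratedDeriv_mul_prod, ivan n hn, smul_zero] at hfs
    have : ((n.factorial : ℂ)) • (p n fun _ => y) = 0 := by
      rwa [Nat.cast_smul_eq_nsmul]
    rcases smul_eq_zero.1 this with h1 | h1
    · exact absurd h1 (by exact_mod_cast Nat.factorial_ne_zero n)
    · exact h1
  have hsum : ∀ y : ℂ, p.partialSum 3 y = 0 := by
    intro y
    refine Finset.sum_eq_zero fun k hk => hps k (Finset.mem_range.1 hk) y
  have hO := (HasFPowerSeriesOnBall.hasFPowerSeriesAt hball).isBigO_sub_partialSum_pow 3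
  simp only [zero_add, hsum, sub_zero] at hO
  exact hO

theorem strang_splitting_second_order_error'
    (X Y : 𝔸) :
    ∃ C > (0 : ℝ), ∃ δ > (0 : ℝ), ∀ t : ℝ, |t| ≤ δ →
      ‖exp (t • (X + Y)) -
        exp ((t / 2) • X) * exp (t • Y) * exp ((t / 2) • X)‖ ≤ C * |t| ^ 3 := by
  have hO := strang_bigO X Y
  rw [Asymptotics.isBigO_iff] at hO
  obtain ⟨c, hc⟩ := hO
  rw [Metric.eventually_nhds_iff] at hc
  obtain ⟨ε, hε, hc⟩ := hc
  refine ⟨max c 1, lt_max_of_lt_right one_pos, ε / 2, by positivity, ?_⟩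
  intro t ht
  have hnorm : ‖(t : ℂ)‖ = |t| := by
    rw [Complex.norm_real, Real.norm_eq_abs]
  have hdist : dist ((t : ℂ)) (0 : ℂ) < ε := by
    rw [dist_zero_right, hnorm]
    linarith [abs_nonneg t]
  have hb := hc hdist
  have e1 : ((t : ℂ)) • (X + Y) = t • (X + Y) := Complex.coe_smul t _
  have e3 : ((t : ℂ)) • Y = t • Y := Complex.coe_smul t Y
  have e2 : ((t : ℂ)) • ((2 : ℂ)⁻¹ • X) = (t / 2 : ℝ) • X := by
    rw [smul_smul, ← Complex.coe_smul (t / 2) X]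
    norm_num
    ring_nf
  rw [e1, e2, e3, hnorm] at hb
  have habs : |(|t| ^ 3)| = |t| ^ 3 := abs_of_nonneg (by positivity)
  calc ‖exp (t • (X + Y)) -
        exp ((t / 2) • X) * exp (t • Y) * exp ((t / 2) • X)‖
      ≤ c * ‖|t| ^ 3‖ := hb
    _ ≤ max c 1 * |t| ^ 3 := by
        rw [Real.norm_eq_abs, habs]
        exact mul_le_mul_of_nonneg_right (le_max_left c 1) (by positivity)

end

theorem strang_splitting_second_order_error
    {𝔸 : Type*} [NormedRing 𝔸] [NormedAlgebra ℂ 𝔸] [CompleteSpace 𝔸]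
    (X Y : 𝔸) :
    ∃ C > (0 : ℝ), ∃ δ > (0 : ℝ), ∀ t : ℝ, |t| ≤ δ →
      ‖exp (t • (X + Y)) -
        exp ((t / 2) • X) * exp (t • Y) * exp ((t / 2) • X)‖ ≤ C * |t| ^ 3 := by
  exact strang_splitting_second_order_error' X Y
end

section
/- Let U, D, V be unitary n×n complex matrices and r a natural number. Then ‖V·D^r·V† − U^r‖ ≤ 2·‖V − I‖ + r·‖D − U‖, where ‖·‖ is the operator norm and V† is the conjugate transpose of V. -/
section helpers

variable {n : ℕ}

lemma my_unitary_norm_le_one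
    {u : EuclideanSpace ℂ (Fin n) →L[ℂ] EuclideanSpace ℂ (Fin n)}
    (hu : u ∈ unitary (EuclideanSpace ℂ (Fin n) →L[ℂ] EuclideanSpace ℂ (Fin n))) :
    ‖u‖ ≤ 1 := by
  refine ContinuousLinearMap.opNorm_le_bound _ zero_le_one (fun x => ?_)
  rw [u.norm_map_of_mem_unitary hu, one_mul]

lemma my_norm_star_clm (V : EuclideanSpace ℂ (Fin n) →L[ℂ] EuclideanSpace ℂ (Fin n)) :
    ‖star V‖ = ‖V‖ := by
  rw [ContinuousLinearMap.star_eq_adjoint]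
  exact ContinuousLinearMap.adjoint.norm_map V

lemma my_pow_sub_pow_bound
    {D U : EuclideanSpace ℂ (Fin n) →L[ℂ] EuclideanSpace ℂ (Fin n)}
    (hD : ‖D‖ ≤ 1) (hU : ‖U‖ ≤ 1) (r : ℕ) :
    ‖D ^ r - U ^ r‖ ≤ r * ‖D - U‖ := by
  have hDk : ∀ k : ℕ, ‖D ^ k‖ ≤ 1 := by
    intro k
    induction k with
    | zero =>
        rw [pow_zero, ContinuousLinearMap.one_def]
        exact ContinuousLinearMap.norm_id_le
    | succ m ihm =>
      rw [pow_succ]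
      calc ‖D ^ m * D‖ ≤ ‖D ^ m‖ * ‖D‖ := norm_mul_le _ _
        _ ≤ 1 * 1 := mul_le_mul ihm hD (norm_nonneg _) zero_le_one
        _ = 1 := one_mul 1
  induction r with
  | zero =>
    simp only [pow_zero, sub_self, norm_zero, Nat.cast_zero, zero_mul, le_refl]
  | succ k ih =>
    have key : D ^ (k + 1) - U ^ (k + 1) = D ^ k * (D - U) + (D ^ k - U ^ k) * U := by
      rw [pow_succ, pow_succ]; simp only [sub_mul, mul_sub, mul_assoc]; abel
    rw [key]
    calc ‖D ^ k * (D - U) + (D ^ k - U ^ k) * U‖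
        ≤ ‖D ^ k * (D - U)‖ + ‖(D ^ k - U ^ k) * U‖ := norm_add_le _ _
      _ ≤ ‖D ^ k‖ * ‖D - U‖ + ‖D ^ k - U ^ k‖ * ‖U‖ :=
          add_le_add (norm_mul_le _ _) (norm_mul_le _ _)
      _ ≤ 1 * ‖D - U‖ + (k * ‖D - U‖) * 1 :=
          add_le_add (mul_le_mul (hDk k) le_rfl (norm_nonneg _) zero_le_one)
            (mul_le_mul ih hU (norm_nonneg _) (by positivity))
      _ = (↑(k + 1)) * ‖D - U‖ := by push_cast; ring

end helpers

theorem eigenvalue_basis_error_split (n : ℕ)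
    (U D V : EuclideanSpace ℂ (Fin n) →L[ℂ] EuclideanSpace ℂ (Fin n))
    (hU : U ∈ unitary (EuclideanSpace ℂ (Fin n) →L[ℂ] EuclideanSpace ℂ (Fin n)))
    (hD : D ∈ unitary (EuclideanSpace ℂ (Fin n) →L[ℂ] EuclideanSpace ℂ (Fin n)))
    (hV : V ∈ unitary (EuclideanSpace ℂ (Fin n) →L[ℂ] EuclideanSpace ℂ (Fin n)))
    (r : ℕ) :
    ‖V * D ^ r * star V - U ^ r‖ ≤ 2 * ‖V - 1‖ + r * ‖D - U‖ := by
  have hDn : ‖D‖ ≤ 1 := my_unitary_norm_le_one hD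
  have hUn : ‖U‖ ≤ 1 := my_unitary_norm_le_one hU
  have hVs : ‖star V‖ ≤ 1 := by
    rw [my_norm_star_clm]; exact my_unitary_norm_le_one hV
  have hDr : ‖D ^ r‖ ≤ 1 := by
    induction r with
    | zero =>
        rw [pow_zero, ContinuousLinearMap.one_def]
        exact ContinuousLinearMap.norm_id_le
    | succ m ihm =>
      rw [pow_succ]
      calc ‖D ^ m * D‖ ≤ ‖D ^ m‖ * ‖D‖ := norm_mul_le _ _
        _ ≤ 1 * 1 := mul_le_mul ihm hDn (norm_nonneg _) zero_le_one
        _ = 1 := one_mul 1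
  have key : V * D ^ r * star V - U ^ r =
      (V - 1) * (D ^ r * star V) + D ^ r * (star V - 1) + (D ^ r - U ^ r) := by
    simp only [sub_mul, mul_sub, one_mul, mul_one, mul_assoc]; abel
  rw [key]
  have h1 : ‖(V - 1) * (D ^ r * star V)‖ ≤ ‖V - 1‖ := by
    calc ‖(V - 1) * (D ^ r * star V)‖ ≤ ‖V - 1‖ * ‖D ^ r * star V‖ := norm_mul_le _ _
      _ ≤ ‖V - 1‖ * (1 * 1) := by
          have : ‖D ^ r * star V‖ ≤ 1 * 1 := by
            calc ‖D ^ r * star V‖ ≤ ‖D ^ r‖ * ‖star V‖ := norm_mul_le _ _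
              _ ≤ 1 * 1 := mul_le_mul hDr hVs (norm_nonneg _) zero_le_one
          exact mul_le_mul_of_nonneg_left this (norm_nonneg _)
      _ = ‖V - 1‖ := by ring
  have h2 : ‖D ^ r * (star V - 1)‖ ≤ ‖V - 1‖ := by
    have hst : star V - 1 = star (V - 1) := by
      have h := star_sub V (1 : EuclideanSpace ℂ (Fin n) →L[ℂ] EuclideanSpace ℂ (Fin n))
      rw [h, star_one]
    calc ‖D ^ r * (star V - 1)‖ ≤ ‖D ^ r‖ * ‖star V - 1‖ := norm_mul_le _ _
      _ ≤ 1 * ‖V - 1‖ := by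
          rw [hst, my_norm_star_clm]
          exact mul_le_mul_of_nonneg_right hDr (norm_nonneg _)
      _ = ‖V - 1‖ := one_mul _
  have h3 := my_pow_sub_pow_bound hDn hUn r
  calc ‖(V - 1) * (D ^ r * star V) + D ^ r * (star V - 1) + (D ^ r - U ^ r)‖
      ≤ ‖(V - 1) * (D ^ r * star V) + D ^ r * (star V - 1)‖ + ‖D ^ r - U ^ r‖ := norm_add_le _ _
    _ ≤ (‖(V - 1) * (D ^ r * star V)‖ + ‖D ^ r * (star V - 1)‖) + ‖D ^ r - U ^ r‖ := by
        gcongr; exact norm_add_le _ _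
    _ ≤ (‖V - 1‖ + ‖V - 1‖) + r * ‖D - U‖ := by gcongr
    _ = 2 * ‖V - 1‖ + r * ‖D - U‖ := by ring
end
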